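/- Let P, Q : ℝ → ℝ be continuous with P(t)/Q(t) → 0 both as |t| → ∞ and as t → 0 (with P(0) = 0). Let (u_n) be measurable functions on ℝᴺ with sup_n ∫_{ℝᴺ} |Q(u_n)| dx < ∞, P(u_n(x)) → v(x) a.e., and u_n(x) → 0 as |x| → ∞ uniformly in n (i.e., for every ε > 0 there is R > 0 such that |u_n(x)| ≤ ε for all n and all |x| ≥ R). Then P(u_n) → v in L¹(ℝᴺ). -/

import Mathlib

open MeasureTheory Filter
open scoped ENNReal Topology

lemma trunc_eq_self (K t : ℝ) (h : |t| ≤ K) : max (-K) (min t K) = t := by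
  rcases abs_le.mp h with ⟨h1, h2⟩
  rw [min_eq_left h2, max_eq_right h1]

lemma trunc_abs_le (K t : ℝ) (hK : 0 ≤ K) : |max (-K) (min t K)| ≤ |t| := by
  rcases le_total t K with h1 | h1 <;> rcases le_total (-K) t with h2 | h2 <;>
    rcases abs_cases t with ⟨h3, h4⟩ | ⟨h3, h4⟩ <;>
    rw [abs_le] <;> constructor <;>
    simp [min_eq_left, min_eq_right, le_max_iff, max_le_iff, min_le_iff, le_min_iff, *] <;>
    linarith

lemma trunc_abs_le_K (K t : ℝ) (hK : 0 ≤ K) : |max (-K) (min t K)| ≤ K := by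
  rw [abs_le]
  exact ⟨le_max_left _ _, max_le (by linarith) (min_le_right _ _)⟩

lemma trunc_sub_abs_le (K t : ℝ) (hK : 0 ≤ K) : |t - max (-K) (min t K)| ≤ |t| := by
  rcases le_total t K with h1 | h1 <;> rcases le_total (-K) t with h2 | h2 <;>
    rcases abs_cases t with ⟨h3, h4⟩ | ⟨h3, h4⟩ <;>
    rw [abs_le] <;> constructor <;>
    simp [min_eq_left, min_eq_right, le_max_iff, max_le_iff, min_le_iff, le_min_iff, *] <;>
    linarith

theorem strauss_global (N : ℕ) (hN : 1 ≤ N)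
    (P Q : ℝ → ℝ) (hP : Continuous P) (hQ : Continuous Q) (hP0 : P 0 = 0)
    (hPQ_infty : ∀ ε : ℝ, 0 < ε → ∃ M : ℝ, 0 < M ∧ ∀ t : ℝ, M ≤ |t| → |P t| ≤ ε * |Q t|)
    (hPQ_zero : ∀ ε : ℝ, 0 < ε → ∃ δ : ℝ, 0 < δ ∧ ∀ t : ℝ, |t| ≤ δ → |P t| ≤ ε * |Q t|)
    (u : ℕ → EuclideanSpace ℝ (Fin N) → ℝ) (hu : ∀ n, Measurable (u n))
    (v : EuclideanSpace ℝ (Fin N) → ℝ)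
    (hQbd : ∃ C : ℝ, ∀ n, (∫⁻ x, ENNReal.ofReal |Q (u n x)|) ≤ ENNReal.ofReal C)
    (hconv : ∀ᵐ x : EuclideanSpace ℝ (Fin N),
      Tendsto (fun n => P (u n x)) atTop (𝓝 (v x)))
    (hdecay : ∀ ε : ℝ, 0 < ε → ∃ R : ℝ, 0 < R ∧
      ∀ n, ∀ x : EuclideanSpace ℝ (Fin N), R ≤ ‖x‖ → |u n x| ≤ ε) :
    Tendsto (fun n => ∫⁻ x, ENNReal.ofReal (|P (u n x) - v x|)) atTop (𝓝 0) := by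
  classical
  obtain ⟨C₀, hC₀⟩ := hQbd
  set C : ℝ := max C₀ 1 with hCdef
  have hC1 : 0 < C := lt_of_lt_of_le one_pos (le_max_right _ _)
  have hCbd : ∀ n, (∫⁻ x, ENNReal.ofReal |Q (u n x)|) ≤ ENNReal.ofReal C := fun n =>
    (hC₀ n).trans (ENNReal.ofReal_le_ofReal (le_max_left _ _))
  have hv : AEMeasurable v := aemeasurable_of_tendsto_metrizable_ae'
    (fun n => (hP.measurable.comp (hu n)).aemeasurable) hconv
  rw [ENNReal.tendsto_nhds_zero]
  intro ε hε
  obtain ⟨η, hη0, hηε⟩ : ∃ η : ℝ, 0 < η ∧ ENNReal.ofReal η ≤ ε := by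
    rcases eq_or_ne ε ⊤ with h | h
    · exact ⟨1, one_pos, by simp [h]⟩
    · exact ⟨ε.toReal, ENNReal.toReal_pos hε.ne' h, by rw [ENNReal.ofReal_toReal h]⟩
  set e : ℝ := η / (8 * C) with hedef
  have he : 0 < e := by positivity
  have heC : e * C = η / 8 := by
    rw [hedef, div_mul_eq_mul_div, mul_div_mul_right _ _ hC1.ne']
  obtain ⟨M, hM0, hM⟩ := hPQ_infty e he
  obtain ⟨δ, hδ0, hδ⟩ := hPQ_zero e he
  obtain ⟨R, hR0, hR⟩ := hdecay δ hδ0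
  -- K : bound of |P| on [-M, M]
  obtain ⟨t₀, ht₀mem, ht₀⟩ := (isCompact_Icc (a := -M) (b := M)).exists_isMaxOn
    ⟨0, Set.mem_Icc.mpr ⟨by linarith, hM0.le⟩⟩ ((continuous_abs.comp hP).continuousOn)
  set K : ℝ := |P t₀| with hKdef
  have hK0 : (0:ℝ) ≤ K := abs_nonneg _
  have hK : ∀ t : ℝ, |t| ≤ M → |P t| ≤ K := fun t ht => ht₀ (abs_le.mp ht)
  set T : ℝ → ℝ := fun t => max (-K) (min t K) with hTdef
  have hTcont : Continuous T := continuous_const.max (continuous_id.min continuous_const)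
  set f : ℕ → EuclideanSpace ℝ (Fin N) → ℝ := fun n x => P (u n x) with hfdef
  have hf : ∀ n, Measurable (f n) := fun n => hP.measurable.comp (hu n)
  -- pointwise estimates
  have hA : ∀ n x, |f n x - T (f n x)| ≤ e * |Q (u n x)| := by
    intro n x
    by_cases hx : |P (u n x)| ≤ K
    · simp only [hfdef, hTdef]
      rw [trunc_eq_self K _ hx]
      simp only [sub_self, abs_zero]
      positivity
    · have hM' : M ≤ |u n x| := by
        by_contra h
        push_neg at h
        exact hx (hK _ h.le)
      exact (trunc_sub_abs_le K _ hK0).trans (hM _ hM')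
  have hBout : ∀ n x, R ≤ ‖x‖ → |T (f n x)| ≤ e * |Q (u n x)| := fun n x hx =>
    (trunc_abs_le K _ hK0).trans (hδ _ (hR n x hx))
  -- integral of e * |Q (u n)|
  have hmQ : ∀ n, Measurable fun x => ENNReal.ofReal (e * |Q (u n x)|) := fun n =>
    ENNReal.measurable_ofReal.comp
      ((continuous_const.mul (continuous_abs.comp hQ)).measurable.comp (hu n))
  have hQint : ∀ n, (∫⁻ x, ENNReal.ofReal (e * |Q (u n x)|)) ≤ ENNReal.ofReal (e * C) := by
    intro n
    calc (∫⁻ x, ENNReal.ofReal (e * |Q (u n x)|))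
        = ENNReal.ofReal e * ∫⁻ x, ENNReal.ofReal |Q (u n x)| := by
          simp_rw [ENNReal.ofReal_mul he.le]
          exact lintegral_const_mul _ (ENNReal.measurable_ofReal.comp
            ((continuous_abs.comp hQ).measurable.comp (hu n)))
      _ ≤ ENNReal.ofReal e * ENNReal.ofReal C := mul_le_mul_right (hCbd n) _
      _ = ENNReal.ofReal (e * C) := (ENNReal.ofReal_mul he.le).symm
  -- Term 1
  have hT1 : ∀ n, (∫⁻ x, ENNReal.ofReal |f n x - T (f n x)|) ≤ ENNReal.ofReal (e * C) :=
    fun n => (lintegral_mono fun x => ENNReal.ofReal_le_ofReal (hA n x)).trans (hQint n)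
  -- Term 3
  have hT3 : (∫⁻ x, ENNReal.ofReal |v x - T (v x)|) ≤ ENNReal.ofReal (e * C) := by
    have hae : ∀ᵐ x : EuclideanSpace ℝ (Fin N),
        ENNReal.ofReal |v x - T (v x)| ≤
          liminf (fun n => ENNReal.ofReal (e * |Q (u n x)|)) atTop := by
      filter_upwards [hconv] with x hx
      have h1 : Tendsto (fun n => ENNReal.ofReal |f n x - T (f n x)|) atTop
          (𝓝 (ENNReal.ofReal |v x - T (v x)|)) :=
        (ENNReal.continuous_ofReal.tendsto _).comp
          (((continuous_abs.comp (continuous_id.sub hTcont)).tendsto _).comp hx)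
      rw [← h1.liminf_eq]
      exact liminf_le_liminf (Eventually.of_forall fun n =>
        ENNReal.ofReal_le_ofReal (hA n x))
    calc (∫⁻ x, ENNReal.ofReal |v x - T (v x)|)
        ≤ ∫⁻ x, liminf (fun n => ENNReal.ofReal (e * |Q (u n x)|)) atTop :=
          lintegral_mono_ae hae
      _ ≤ liminf (fun n => ∫⁻ x, ENNReal.ofReal (e * |Q (u n x)|)) atTop :=
          lintegral_liminf_le hmQ
      _ ≤ ENNReal.ofReal (e * C) := by
          refine (liminf_le_liminf (Eventually.of_forall hQint)).trans ?_
          simp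
  -- the ball
  set B : Set (EuclideanSpace ℝ (Fin N)) := Metric.closedBall 0 R with hBdef
  have hBmeas : MeasurableSet B := Metric.isClosed_closedBall.measurableSet
  have hxout : ∀ x, x ∈ Bᶜ → R ≤ ‖x‖ := by
    intro x hx
    simp only [hBdef, Set.mem_compl_iff, Metric.mem_closedBall, dist_zero_right, not_le] at hx
    exact hx.le
  -- Term 2 outside, f part
  have hT2of : ∀ n, (∫⁻ x in Bᶜ, ENNReal.ofReal |T (f n x)|) ≤ ENNReal.ofReal (e * C) := by
    intro n
    have h1 : (∫⁻ x in Bᶜ, ENNReal.ofReal |T (f n x)|)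
        ≤ ∫⁻ x in Bᶜ, ENNReal.ofReal (e * |Q (u n x)|) := by
      refine lintegral_mono_ae ?_
      filter_upwards [ae_restrict_mem hBmeas.compl] with x hx
      exact ENNReal.ofReal_le_ofReal (hBout n x (hxout x hx))
    exact h1.trans ((lintegral_mono' Measure.restrict_le_self le_rfl).trans (hQint n))
  -- Term 2 outside, v part
  have hT2ov : (∫⁻ x in Bᶜ, ENNReal.ofReal |T (v x)|) ≤ ENNReal.ofReal (e * C) := by
    have hae : ∀ᵐ x ∂(volume.restrict Bᶜ),
        ENNReal.ofReal |T (v x)| ≤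
          liminf (fun n => ENNReal.ofReal (e * |Q (u n x)|)) atTop := by
      filter_upwards [ae_restrict_of_ae hconv, ae_restrict_mem hBmeas.compl] with x hx hxB
      have h1 : Tendsto (fun n => ENNReal.ofReal |T (f n x)|) atTop
          (𝓝 (ENNReal.ofReal |T (v x)|)) :=
        (ENNReal.continuous_ofReal.tendsto _).comp
          (((continuous_abs.comp hTcont).tendsto _).comp hx)
      rw [← h1.liminf_eq]
      exact liminf_le_liminf (Eventually.of_forall fun n =>
        ENNReal.ofReal_le_ofReal (hBout n x (hxout x hxB)))
    calc (∫⁻ x in Bᶜ, ENNReal.ofReal |T (v x)|)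
        ≤ ∫⁻ x in Bᶜ, liminf (fun n => ENNReal.ofReal (e * |Q (u n x)|)) atTop :=
          lintegral_mono_ae hae
      _ ≤ liminf (fun n => ∫⁻ x in Bᶜ, ENNReal.ofReal (e * |Q (u n x)|)) atTop :=
          lintegral_liminf_le hmQ
      _ ≤ ENNReal.ofReal (e * C) := by
          refine (liminf_le_liminf (Eventually.of_forall fun n =>
            (lintegral_mono' Measure.restrict_le_self le_rfl).trans (hQint n))).trans ?_
          simp
  -- Term 2 inside: dominated convergence
  have hmTf : ∀ n, AEMeasurable (fun x => ENNReal.ofReal |T (f n x) - T (v x)|)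
      (volume.restrict B) := by
    intro n
    refine ENNReal.measurable_ofReal.comp_aemeasurable ?_
    exact continuous_abs.measurable.comp_aemeasurable
      (((hTcont.measurable.comp (hf n)).aemeasurable.restrict).sub
        (hTcont.measurable.comp_aemeasurable hv.restrict))
  have hT2in : Tendsto (fun n => ∫⁻ x in B, ENNReal.ofReal |T (f n x) - T (v x)|) atTop
      (𝓝 0) := by
    have h0 : (0 : ℝ≥0∞) = ∫⁻ _x in B, (0 : ℝ≥0∞) := by simp
    rw [h0]
    refine tendsto_lintegral_of_dominated_convergence' (fun _ => ENNReal.ofReal (K + K))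
      hmTf ?_ ?_ ?_
    · intro n
      refine Eventually.of_forall fun x => ?_
      refine ENNReal.ofReal_le_ofReal ?_
      calc |T (f n x) - T (v x)| ≤ |T (f n x)| + |T (v x)| := abs_sub _ _
        _ ≤ K + K := add_le_add (trunc_abs_le_K K _ hK0) (trunc_abs_le_K K _ hK0)
    · rw [lintegral_const]
      exact ENNReal.mul_ne_top ENNReal.ofReal_ne_top
        (by simpa using measure_closedBall_lt_top.ne)
    · filter_upwards [ae_restrict_of_ae hconv] with x hx
      have h2 : Tendsto (fun n => T (f n x)) atTop (𝓝 (T (v x))) :=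
        (hTcont.tendsto _).comp hx
      have h3 : Tendsto (fun n => ENNReal.ofReal |T (f n x) - T (v x)|) atTop
          (𝓝 (ENNReal.ofReal |T (v x) - T (v x)|)) :=
        (ENNReal.continuous_ofReal.tendsto _).comp
          ((continuous_abs.tendsto _).comp (h2.sub tendsto_const_nhds))
      simpa using h3
  -- eventually inside term small
  have hsmall : ∀ᶠ n in atTop,
      (∫⁻ x in B, ENNReal.ofReal |T (f n x) - T (v x)|) ≤ ENNReal.ofReal (η / 2) :=
    (ENNReal.tendsto_nhds_zero.mp hT2in) _ (ENNReal.ofReal_pos.mpr (by positivity))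
  -- assemble
  filter_upwards [hsmall] with n hn
  have hmeas1 : AEMeasurable (fun x => ENNReal.ofReal |f n x - T (f n x)|)
      (volume : Measure (EuclideanSpace ℝ (Fin N))) :=
    (ENNReal.measurable_ofReal.comp
      (((hf n).sub (hTcont.measurable.comp (hf n))).abs)).aemeasurable
  have hmeas2 : AEMeasurable (fun x => ENNReal.ofReal |T (f n x) - T (v x)|)
      (volume : Measure (EuclideanSpace ℝ (Fin N))) :=
    ENNReal.measurable_ofReal.comp_aemeasurable
      (continuous_abs.measurable.comp_aemeasurable
        ((hTcont.measurable.comp (hf n)).aemeasurable.sub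
          (hTcont.measurable.comp_aemeasurable hv)))
  calc (∫⁻ x, ENNReal.ofReal |P (u n x) - v x|)
      ≤ ∫⁻ x, (ENNReal.ofReal |f n x - T (f n x)|
          + (ENNReal.ofReal |T (f n x) - T (v x)| + ENNReal.ofReal |T (v x) - v x|)) := by
        refine lintegral_mono fun x => ?_
        have h1 : |P (u n x) - v x| ≤ |f n x - T (f n x)|
            + (|T (f n x) - T (v x)| + |T (v x) - v x|) := by
          have e1 := abs_sub_le (f n x) (T (f n x)) (v x)
          have e2 := abs_sub_le (T (f n x)) (T (v x)) (v x)
          simp only [hfdef] at *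
          linarith
        calc ENNReal.ofReal |P (u n x) - v x|
            ≤ ENNReal.ofReal (|f n x - T (f n x)|
                + (|T (f n x) - T (v x)| + |T (v x) - v x|)) :=
              ENNReal.ofReal_le_ofReal h1
          _ = _ := by
              rw [ENNReal.ofReal_add (abs_nonneg _) (by positivity),
                ENNReal.ofReal_add (abs_nonneg _) (abs_nonneg _)]
    _ = (∫⁻ x, ENNReal.ofReal |f n x - T (f n x)|)
        + ((∫⁻ x, ENNReal.ofReal |T (f n x) - T (v x)|)
          + ∫⁻ x, ENNReal.ofReal |T (v x) - v x|) := by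
        rw [lintegral_add_left' hmeas1, lintegral_add_left' hmeas2]
    _ = (∫⁻ x, ENNReal.ofReal |f n x - T (f n x)|)
        + (((∫⁻ x in B, ENNReal.ofReal |T (f n x) - T (v x)|)
            + ∫⁻ x in Bᶜ, ENNReal.ofReal |T (f n x) - T (v x)|)
          + ∫⁻ x, ENNReal.ofReal |T (v x) - v x|) := by
        rw [lintegral_add_compl _ hBmeas]
    _ ≤ ENNReal.ofReal (e * C)
        + ((ENNReal.ofReal (η / 2) + (ENNReal.ofReal (e * C) + ENNReal.ofReal (e * C)))
          + ENNReal.ofReal (e * C)) := by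
        have hOut : (∫⁻ x in Bᶜ, ENNReal.ofReal |T (f n x) - T (v x)|)
            ≤ ENNReal.ofReal (e * C) + ENNReal.ofReal (e * C) := by
          calc (∫⁻ x in Bᶜ, ENNReal.ofReal |T (f n x) - T (v x)|)
              ≤ ∫⁻ x in Bᶜ, (ENNReal.ofReal |T (f n x)| + ENNReal.ofReal |T (v x)|) := by
                refine lintegral_mono fun x => ?_
                calc ENNReal.ofReal |T (f n x) - T (v x)|
                    ≤ ENNReal.ofReal (|T (f n x)| + |T (v x)|) :=
                      ENNReal.ofReal_le_ofReal (abs_sub _ _)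
                  _ = _ := ENNReal.ofReal_add (abs_nonneg _) (abs_nonneg _)
            _ = (∫⁻ x in Bᶜ, ENNReal.ofReal |T (f n x)|)
                + ∫⁻ x in Bᶜ, ENNReal.ofReal |T (v x)| :=
                lintegral_add_left' ((ENNReal.measurable_ofReal.comp
                  ((hTcont.measurable.comp (hf n)).abs)).aemeasurable) _
            _ ≤ ENNReal.ofReal (e * C) + ENNReal.ofReal (e * C) :=
                add_le_add (hT2of n) hT2ov
        have hV : (∫⁻ x, ENNReal.ofReal |T (v x) - v x|) ≤ ENNReal.ofReal (e * C) := by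
          calc (∫⁻ x, ENNReal.ofReal |T (v x) - v x|)
              = ∫⁻ x, ENNReal.ofReal |v x - T (v x)| := by
                simp_rw [abs_sub_comm (T _) _]
          _ ≤ ENNReal.ofReal (e * C) := hT3
        gcongr <;> first
          | exact hT1 n
          | exact hn
          | exact hOut
          | exact hV
    _ ≤ ENNReal.ofReal η := by
        rw [heC]
        rw [← ENNReal.ofReal_add (by positivity) (by positivity),
          ← ENNReal.ofReal_add (by positivity) (by positivity),
          ← ENNReal.ofReal_add (by positivity) (by positivity),
          ← ENNReal.ofReal_add (by positivity) (by positivity)]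
        refine ENNReal.ofReal_le_ofReal ?_
        linarith
    _ ≤ ε := hηε
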